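/- Let G = (V,E) be a finite simple graph that is completely leaf-removable. Then the LP optimum of the vertex-cover linear-programming relaxation equals the minimum vertex cover number: LP(G) = τ(G). -/

import Mathlib

open Finset

variable {V : Type*} [Fintype V] [DecidableEq V]

/-- A fractional vertex cover of `G`. -/
def IsFracCover (G : SimpleGraph V) (x : V → ℝ) : Prop :=
  (∀ v, 0 ≤ x v ∧ x v ≤ 1) ∧ ∀ ⦃u v⦄, G.Adj u v → 1 ≤ x u + x v

/-- The optimum value of the LP relaxation of minimum vertex cover. -/
noncomputable def LPopt (G : SimpleGraph V) : ℝ :=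
  sInf {s : ℝ | ∃ x : V → ℝ, IsFracCover G x ∧ s = ∑ v, x v}

/-- `C` is a vertex cover of `G`. -/
def IsVC (G : SimpleGraph V) (C : Finset V) : Prop :=
  ∀ ⦃u v⦄, G.Adj u v → u ∈ C ∨ v ∈ C

/-- The vertex cover number `τ(G)`. -/
noncomputable def tau (G : SimpleGraph V) : ℕ :=
  sInf {n : ℕ | ∃ C : Finset V, IsVC G C ∧ C.card = n}

/-- `M` is a set of pairwise vertex-disjoint edges of `G`. -/
def IsMatchingSet (G : SimpleGraph V) (M : Finset (Sym2 V)) : Prop :=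
  (∀ e ∈ M, e ∈ G.edgeSet) ∧
  ∀ e ∈ M, ∀ f ∈ M, e ≠ f → ∀ v : V, ¬(v ∈ e ∧ v ∈ f)

/-- The matching number `ν(G)`. -/
noncomputable def nu (G : SimpleGraph V) : ℕ :=
  sSup {n : ℕ | ∃ M : Finset (Sym2 V), IsMatchingSet G M ∧ M.card = n}

/-- The graph obtained from `G` by deleting vertex `v` together with all
edges incident to `v` (the vertex set is kept, `v` becomes isolated). -/
def delVert {V : Type*} (G : SimpleGraph V) (v : V) : SimpleGraph V where
  Adj a b := G.Adj a b ∧ a ≠ v ∧ b ≠ v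
  symm := ⟨fun a b h => ⟨h.1.symm, h.2.2, h.2.1⟩⟩
  loopless := ⟨fun a h => G.loopless.irrefl a h.1⟩

/-- `G` is completely leaf-removable: either `G` has no edges, or there is a
vertex `w` of degree one with unique neighbour `v` such that deleting `v`
(and all edges incident to it) yields a completely leaf-removable graph. -/
inductive CompletelyLeafRemovable {V : Type*} : SimpleGraph V → Prop
  | empty (G : SimpleGraph V) (h : ∀ a b : V, ¬ G.Adj a b) : CompletelyLeafRemovable G
  | step (G : SimpleGraph V) (w v : V) (hadj : G.Adj w v)
      (huniq : ∀ u : V, G.Adj w u → u = v)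
      (h : CompletelyLeafRemovable (delVert G v)) : CompletelyLeafRemovable G

/-- A fractional matching of `G`, encoded as a function on `Sym2 V` vanishing
off the edge set of `G`. -/
def IsFracMatching (G : SimpleGraph V) (y : Sym2 V → ℝ) : Prop :=
  (∀ e ∈ G.edgeSet, 0 ≤ y e) ∧ (∀ e, e ∉ G.edgeSet → y e = 0) ∧
  ∀ v : V, ∑ e ∈ Finset.univ.filter (fun e : Sym2 V => v ∈ e), y e ≤ 1

/-- The value of a fractional matching. -/
noncomputable def FMvalue (y : Sym2 V → ℝ) : ℝ := ∑ e : Sym2 V, y e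

lemma tau_le_card {G : SimpleGraph V} {C : Finset V} (hC : IsVC G C) :
    tau G ≤ C.card := Nat.sInf_le ⟨C, hC, rfl⟩

lemma exists_min_cover (G : SimpleGraph V) :
    ∃ C : Finset V, IsVC G C ∧ C.card = tau G := by
  have hne : {n : ℕ | ∃ C : Finset V, IsVC G C ∧ C.card = n}.Nonempty :=
    ⟨(Finset.univ : Finset V).card, Finset.univ,
      fun u v _ => Or.inl (Finset.mem_univ u), rfl⟩
  obtain ⟨C, hC, hc⟩ := Nat.sInf_mem hne
  exact ⟨C, hC, hc⟩

lemma tau_le_sum_of_fracCover {G : SimpleGraph V} (h : CompletelyLeafRemovable G) :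
    ∀ x : V → ℝ, IsFracCover G x → (tau G : ℝ) ≤ ∑ v, x v := by
  induction h with
  | empty G h =>
    intro x hx
    have hvc : IsVC G (∅ : Finset V) := fun u v huv => absurd huv (h u v)
    have ht : tau G = 0 := Nat.le_zero.mp (by simpa using tau_le_card hvc)
    rw [ht]
    exact by simpa using Finset.sum_nonneg fun v _ => (hx.1 v).1
  | step G w v hadj huniq h ih =>
    intro x hx
    have hwv : w ≠ v := hadj.ne
    -- τ(G) ≤ τ(G') + 1
    obtain ⟨C', hC', hcard⟩ := exists_min_cover (delVert G v)
    have hvc : IsVC G (insert v C') := by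
      intro a b hab
      by_cases ha : a = v
      · exact Or.inl (ha ▸ Finset.mem_insert_self v C')
      by_cases hb : b = v
      · exact Or.inr (hb ▸ Finset.mem_insert_self v C')
      rcases hC' ⟨hab, ha, hb⟩ with h1 | h1
      · exact Or.inl (Finset.mem_insert_of_mem h1)
      · exact Or.inr (Finset.mem_insert_of_mem h1)
    have htau : tau G ≤ tau (delVert G v) + 1 := by
      calc tau G ≤ (insert v C').card := tau_le_card hvc
        _ ≤ C'.card + 1 := Finset.card_insert_le v C'
        _ = tau (delVert G v) + 1 := by rw [hcard]
    -- modified fractional cover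
    set x' : V → ℝ := fun u => if u = w then 0 else if u = v then 0 else x u with hx'def
    have hfc' : IsFracCover (delVert G v) x' := by
      constructor
      · intro u
        by_cases h1 : u = w
        · simp [hx'def, h1]
        by_cases h2 : u = v
        · simp [hx'def, h1, h2]
        · simpa [hx'def, h1, h2] using hx.1 u
      · intro a b hab
        obtain ⟨hab', ha, hb⟩ := hab
        have haw : a ≠ w := fun h' => hb (huniq b (h' ▸ hab'))
        have hbw : b ≠ w := fun h' => ha (huniq a (h' ▸ hab'.symm))
        have := hx.2 hab'
        simpa [hx'def, haw, hbw, ha, hb] using this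
    have hsum : ∑ u, x' u = (∑ u, x u) - x w - x v := by
      have heq : ∀ u, x' u = x u - (if u = w then x u else 0) - (if u = v then x u else 0) := by
        intro u
        by_cases h1 : u = w
        · subst h1; simp [hx'def, hwv]
        by_cases h2 : u = v
        · subst h2; simp [hx'def, h1]
        · simp [hx'def, h1, h2]
      rw [Finset.sum_congr rfl fun u _ => heq u]
      rw [Finset.sum_sub_distrib, Finset.sum_sub_distrib,
        Finset.sum_ite_eq' Finset.univ w x, Finset.sum_ite_eq' Finset.univ v x]
      simp
    have h1le : (1 : ℝ) ≤ x w + x v := hx.2 hadj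
    have hih := ih x' hfc'
    have : (tau (delVert G v) : ℝ) + 1 ≤ ∑ u, x u := by
      have := add_le_add hih h1le
      rw [hsum] at this
      linarith
    calc (tau G : ℝ) ≤ (tau (delVert G v) : ℝ) + 1 := by exact_mod_cast htau
      _ ≤ ∑ u, x u := this

/-- If `G` is completely leaf-removable then the LP optimum of the
vertex-cover LP relaxation equals the minimum vertex cover number. -/
theorem lp_eq_tau_of_completelyLeafRemovable (G : SimpleGraph V)
    (h : CompletelyLeafRemovable G) :
    LPopt G = (tau G : ℝ) := by
  have hlb : ∀ s ∈ {s : ℝ | ∃ x : V → ℝ, IsFracCover G x ∧ s = ∑ v, x v},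
      (tau G : ℝ) ≤ s := by
    rintro s ⟨x, hx, rfl⟩
    exact tau_le_sum_of_fracCover h x hx
  obtain ⟨C, hC, hcard⟩ := exists_min_cover G
  have hmem : ((C.card : ℝ)) ∈ {s : ℝ | ∃ x : V → ℝ, IsFracCover G x ∧ s = ∑ v, x v} := by
    refine ⟨fun u => if u ∈ C then 1 else 0, ⟨fun u => by by_cases h' : u ∈ C <;> simp [h'],
      fun a b hab => ?_⟩, ?_⟩
    · rcases hC hab with h1 | h1
      · have : (0:ℝ) ≤ if b ∈ C then 1 else 0 := by by_cases h' : b ∈ C <;> simp [h']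
        simp [h1]; linarith
      · have : (0:ℝ) ≤ if a ∈ C then 1 else 0 := by by_cases h' : a ∈ C <;> simp [h']
        simp [h1]; linarith
    · rw [Finset.sum_ite_mem, Finset.univ_inter, Finset.sum_const, nsmul_eq_mul, mul_one]
  apply le_antisymm
  · calc LPopt G ≤ (C.card : ℝ) := csInf_le ⟨(tau G : ℝ), hlb⟩ hmem
      _ = (tau G : ℝ) := by exact_mod_cast hcard
  · exact le_csInf ⟨_, hmem⟩ hlb
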